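/- Let A = (Q, Σ, δ, P) be an exact ε-machine with n = |Q| states and steady state distribution π, and let π_min = min_q π_q, π_max = max_q π_q. Then for each L ≥ 1, π_min · ‖T(A₂)^L‖₁ ≤ P_π(NSYN_L) ≤ n² · π_max · ‖T(A₂)^L‖₁, where ‖·‖₁ denotes the maximum row sum of a nonnegative matrix. -/

import Mathlib

open scoped BigOperators ENNReal

attribute [local instance] Classical.propDecidable

variable {Q A : Type*}

/-- Extension of a partial transition function to words. -/
def stepWord (δ : Q → A → Option Q) : Q → List A → Option Q
  | q, [] => some q
  | q, a :: w => (δ q a).bind fun q' => stepWord δ q' w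

/-- Probability of generating a word from a given state. -/
noncomputable def probWord (P : Q → A → ℝ) (δ : Q → A → Option Q) : Q → List A → ℝ
  | _, [] => 1
  | p, a :: w => P p a * ((δ p a).elim 0 fun p' => probWord P δ p' w)

/-- `w` is a reset word: the set of defined images of all states under `w` is a singleton. -/
def IsResetWord (δ : Q → A → Option Q) (w : List A) : Prop :=
  ∃ r : Q, (∃ q : Q, stepWord δ q w = some r) ∧ ∀ q s : Q, stepWord δ q w = some s → s = r

/-- `w` merges the pair `{p, q}` : the set of defined images of `p` and `q` under `w`
is a singleton. -/
def MergedBy (δ : Q → A → Option Q) (p q : Q) (w : List A) : Prop :=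
  ∃ r : Q, (stepWord δ p w = some r ∨ stepWord δ q w = some r) ∧
    (∀ s : Q, stepWord δ p w = some s → s = r) ∧ ∀ s : Q, stepWord δ q w = some s → s = r

/-- A deadlock pair : a pair of distinct states that no word merges. -/
def IsDeadlockPair (δ : Q → A → Option Q) (p q : Q) : Prop :=
  p ≠ q ∧ ∀ w : List A, ¬ MergedBy δ p q w

/-- An ε-machine. -/
structure EpsMachine (Q A : Type*) [Fintype Q] [Fintype A] : Type _ where
  δ : Q → A → Option Q
  P : Q → A → ℝ
  nonneg : ∀ q a, 0 ≤ P q a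
  sum_one : ∀ q : Q, ∑ a : A, P q a = 1
  zero_iff : ∀ q a, P q a = 0 ↔ δ q a = none
  strong_conn : ∀ p q : Q, ∃ w : List A, stepWord δ p w = some q
  card_alpha : 1 < Fintype.card A
  nonequiv : ∀ p q : Q, p ≠ q → ∃ u : List A, probWord P δ p u ≠ probWord P δ q u

/-- An ε-machine is exact if it admits a reset word. -/
def IsExact [Fintype Q] [Fintype A] (M : EpsMachine Q A) : Prop :=
  ∃ w : List A, IsResetWord M.δ w

/-- Transition function of the pair semi-machine `A₂`. -/
noncomputable def pairStep (δ : Q → A → Option Q) (pq : Q × Q) (a : A) : Option (Q × Q) :=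
  match δ pq.1 a, δ pq.2 a with
  | some p', some q' => if p' = q' then none else some (p', q')
  | _, _ => none

/-- Weights of the pair semi-machine `A₂`. -/
noncomputable def pairP (δ : Q → A → Option Q) (P : Q → A → ℝ) (pq : Q × Q) (a : A) : ℝ :=
  if pairStep δ pq a = none then 0 else P pq.1 a

/-- The states of the pair semi-machine : ordered pairs of distinct states. -/
abbrev PairState (Q : Type*) := {pq : Q × Q // pq.1 ≠ pq.2}

variable [Fintype Q] [Fintype A]

/-- The transition probability matrix `T(A₂)` of the pair semi-machine. -/
noncomputable def pairMatrix (δ : Q → A → Option Q) (P : Q → A → ℝ) :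
    Matrix (PairState Q) (PairState Q) ℝ :=
  fun s t => ∑ a : A, if pairStep δ s.val a = some t.val then P s.val.1 a else 0

/-- `R^L_{p,q}` : the sum of the `(p,q)`-th row entries of `T(A₂)^L`. -/
noncomputable def RLrow (δ : Q → A → Option Q) (P : Q → A → ℝ) (L : ℕ) (s : PairState Q) : ℝ :=
  ∑ t : PairState Q, (pairMatrix δ P ^ L) s t

/-- `R^L_p = ∑_{q ≠ p} R^L_{p,q}`. -/
noncomputable def RLp (δ : Q → A → Option Q) (P : Q → A → ℝ) (L : ℕ) (p : Q) : ℝ :=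
  ∑ q : Q, if h : p = q then 0 else RLrow δ P L ⟨(p, q), h⟩

/-- `MaxR^L_p = max_{q ≠ p} R^L_{p,q}`. -/
noncomputable def MaxRLp (δ : Q → A → Option Q) (P : Q → A → ℝ) (L : ℕ) (p : Q) : ℝ :=
  sSup {x : ℝ | ∃ (q : Q) (h : p ≠ q), x = RLrow δ P L ⟨(p, q), h⟩}

/-- `π` is a positive stationary (steady state) probability distribution of the Markov chain
on the machine states with transition probabilities `P(p → q) = ∑_{x : p.x = q} P_p(x)`. -/
def EpsIsStationary (δ : Q → A → Option Q) (P : Q → A → ℝ) (π : Q → ℝ) : Prop :=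
  (∀ q, 0 < π q) ∧ (∑ q : Q, π q = 1) ∧
    ∀ q : Q, π q = ∑ p : Q, π p * ∑ a : A, if δ p a = some q then P p a else 0

/-- `P_π(w) = ∑_q π_q P_q(w)`. -/
noncomputable def Ppi (δ : Q → A → Option Q) (P : Q → A → ℝ) (π : Q → ℝ) (w : List A) : ℝ :=
  ∑ q : Q, π q * probWord P δ q w

/-- `P_π(NSYN_L)` : the probability of generating a non-reset word of length `L`. -/
noncomputable def nsynProb (δ : Q → A → Option Q) (P : Q → A → ℝ) (π : Q → ℝ) (L : ℕ) : ℝ :=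
  ∑ w : Fin L → A, if IsResetWord δ (List.ofFn w) then 0 else Ppi δ P π (List.ofFn w)

/-- The maximum row sum (the `‖·‖₁` norm of a nonnegative matrix). -/
noncomputable def maxRowSum {n : Type*} [Fintype n] (T : Matrix n n ℝ) : ℝ :=
  sSup {x : ℝ | ∃ s : n, x = ∑ t : n, T s t}

/-- The belief distribution `φ(w)` of the observer after the machine generated `w`. -/
noncomputable def belief (δ : Q → A → Option Q) (P : Q → A → ℝ) (π : Q → ℝ)
    (w : List A) (q : Q) : ℝ :=
  (∑ p : Q, if stepWord δ p w = some q then π p * probWord P δ p w else 0) / Ppi δ P π w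

/-- `Q_L(w) = 1 - max_q φ(w)_q` : the combined probability of all states other than the
most likely one. -/
noncomputable def QLw (δ : Q → A → Option Q) (P : Q → A → ℝ) (π : Q → ℝ) (w : List A) : ℝ :=
  1 - sSup (Set.range (belief δ P π w))

/-- `P(Q_L > b^L)`. -/
noncomputable def probQLgt (δ : Q → A → Option Q) (P : Q → A → ℝ) (π : Q → ℝ)
    (b : ℝ) (L : ℕ) : ℝ :=
  ∑ w : Fin L → A, if b ^ L < QLw δ P π (List.ofFn w) then Ppi δ P π (List.ofFn w) else 0

/-- The prediction rate constant `prc(A)` : the infimum of all `a > 0` such that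
`P(Q_L > a^L) → 0` as `L → ∞`. -/
noncomputable def prc (δ : Q → A → Option Q) (P : Q → A → ℝ) (π : Q → ℝ) : ℝ :=
  sInf {a : ℝ | 0 < a ∧
    Filter.Tendsto (fun L : ℕ => probQLgt δ P π a L) Filter.atTop (nhds 0)}

/-- `E(Q_L^{1/L})`. -/
noncomputable def EQL (δ : Q → A → Option Q) (P : Q → A → ℝ) (π : Q → ℝ) (L : ℕ) : ℝ :=
  ∑ w : Fin L → A, Ppi δ P π (List.ofFn w) * QLw δ P π (List.ofFn w) ^ ((L : ℝ)⁻¹)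

/-- `E(1/Q_L^{1/L})`, computed in the extended reals (with `1/0 = ∞`). -/
noncomputable def EinvQL (δ : Q → A → Option Q) (P : Q → A → ℝ) (π : Q → ℝ) (L : ℕ) : ℝ≥0∞ :=
  ∑ w : Fin L → A, ENNReal.ofReal (Ppi δ P π (List.ofFn w)) *
    (ENNReal.ofReal (QLw δ P π (List.ofFn w)))⁻¹ ^ ((L : ℝ)⁻¹)

/-- A deadlock component : a nonempty, strongly connected set of deadlock pairs closed
under the action of all letters. -/
def IsDeadlockComponent (δ : Q → A → Option Q) (S : Set (Q × Q)) : Prop :=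
  S.Nonempty ∧ (∀ pq ∈ S, IsDeadlockPair δ pq.1 pq.2) ∧
    (∀ pq ∈ S, ∀ a : A, ∀ r : Q × Q, pairStep δ pq a = some r → r ∈ S) ∧
    ∀ pq ∈ S, ∀ rs ∈ S, ∃ w : List A, stepWord (pairStep δ) pq w = some rs

/-- The states of the edge machine `M_edge` of a component `S` of the pair semi-machine :
pairs `(x, k)` with `k ∈ S` and `P_k(x) > 0`. -/
abbrev EdgeState (δ : Q → A → Option Q) (P : Q → A → ℝ) (S : Set (Q × Q)) :=
  {e : A × (Q × Q) // e.2 ∈ S ∧ 0 < pairP δ P e.2 e.1}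

/-- `ρ` is a stationary (equilibrium) distribution of the edge machine `M_edge`,
whose transition probabilities are `P((x,k) → (y,j)) = P_j(y)·I(x,k,j)`. -/
def IsEdgeStationary (δ : Q → A → Option Q) (P : Q → A → ℝ) (S : Set (Q × Q))
    (ρ : EdgeState δ P S → ℝ) : Prop :=
  (∀ r, 0 ≤ ρ r) ∧ (∑ r : EdgeState δ P S, ρ r = 1) ∧
    ∀ t : EdgeState δ P S, ρ t = ∑ s : EdgeState δ P S, ρ s *
      (if pairStep δ s.val.2 s.val.1 = some t.val.2 then pairP δ P t.val.2 t.val.1 else 0)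

/-- `E_M = ∑_r ρ_r F(r)` where `F((x,(p,q))) = ln (P_p(x) / P_q(x))`. -/
noncomputable def EMval (δ : Q → A → Option Q) (P : Q → A → ℝ) (S : Set (Q × Q))
    (ρ : EdgeState δ P S → ℝ) : ℝ :=
  ∑ r : EdgeState δ P S, ρ r * Real.log (P r.val.2.1 r.val.1 / P r.val.2.2 r.val.1)


section Stmt2Aux

variable {Q A : Type*}

lemma probWord_nonneg' (P : Q → A → ℝ) (δ : Q → A → Option Q) (h : ∀ q a, 0 ≤ P q a) :
    ∀ (w : List A) (q : Q), 0 ≤ probWord P δ q w := by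
  intro w
  induction w with
  | nil => intro q; simp [probWord]
  | cons a w ih =>
    intro q
    simp only [probWord]
    apply mul_nonneg (h q a)
    cases hd : δ q a with
    | none => simp
    | some q' => simpa using ih q'

lemma probWord_eq_zero' (P : Q → A → ℝ) (δ : Q → A → Option Q)
    (hz : ∀ q a, P q a = 0 ↔ δ q a = none) :
    ∀ (w : List A) (q : Q), stepWord δ q w = none → probWord P δ q w = 0 := by
  intro w
  induction w with
  | nil => intro q hq; simp [stepWord] at hq
  | cons a w ih =>
    intro q hq
    simp only [stepWord] at hq
    simp only [probWord]
    cases hd : δ q a with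
    | none => rw [(hz q a).2 hd]; ring
    | some q' =>
      rw [hd] at hq
      simp only [Option.bind_some] at hq
      simp [hd, ih q' hq]

lemma pairStep_eq_some {δ : Q → A → Option Q} {pq r : Q × Q} {a : A}
    (h : pairStep δ pq a = some r) :
    δ pq.1 a = some r.1 ∧ δ pq.2 a = some r.2 ∧ r.1 ≠ r.2 := by
  unfold pairStep at h
  cases h1 : δ pq.1 a with
  | none => rw [h1] at h; simp at h
  | some p' =>
    cases h2 : δ pq.2 a with
    | none => rw [h1, h2] at h; simp at h
    | some q' =>
      rw [h1, h2] at h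
      simp only [] at h
      by_cases hpq : p' = q'
      · rw [if_pos hpq] at h; simp at h
      · rw [if_neg hpq] at h
        obtain rfl := Option.some.inj h
        exact ⟨rfl, rfl, hpq⟩

lemma pairStep_eq_some_of {δ : Q → A → Option Q} {p q p' q' : Q} {a : A}
    (h1 : δ p a = some p') (h2 : δ q a = some q') (hne : p' ≠ q') :
    pairStep δ (p, q) a = some (p', q') := by
  unfold pairStep
  rw [show δ (p, q).1 a = some p' from h1, show δ (p, q).2 a = some q' from h2]
  simp [hne]

lemma pairStep_diag {δ : Q → A → Option Q} (q : Q) (a : A) :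
    pairStep δ (q, q) a = none := by
  unfold pairStep
  cases hd : δ q a <;> simp

lemma stepWord_pair_some {δ : Q → A → Option Q} :
    ∀ (w : List A) (pq r : Q × Q), stepWord (pairStep δ) pq w = some r →
      stepWord δ pq.1 w = some r.1 ∧ stepWord δ pq.2 w = some r.2 ∧
        (pq.1 ≠ pq.2 → r.1 ≠ r.2) := by
  intro w
  induction w with
  | nil =>
    intro pq r h
    obtain rfl : pq = r := by simpa [stepWord] using h
    exact ⟨rfl, rfl, id⟩
  | cons a w ih =>
    intro pq r h
    simp only [stepWord] at h ⊢
    cases hm : pairStep δ pq a with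
    | none => rw [hm] at h; simp at h
    | some m =>
      rw [hm] at h
      simp only [Option.bind_some] at h
      obtain ⟨hd1, hd2, hmne⟩ := pairStep_eq_some hm
      obtain ⟨hs1, hs2, hne⟩ := ih m r h
      rw [hd1, hd2]
      exact ⟨by simpa using hs1, by simpa using hs2, fun _ => hne hmne⟩

lemma stepWord_pair_of {δ : Q → A → Option Q} :
    ∀ (w : List A) (p q p' q' : Q), stepWord δ p w = some p' → stepWord δ q w = some q' →
      p' ≠ q' → stepWord (pairStep δ) (p, q) w = some (p', q') := by
  intro w
  induction w with
  | nil =>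
    intro p q p' q' h1 h2 _
    obtain rfl : p = p' := by simpa [stepWord] using h1
    obtain rfl : q = q' := by simpa [stepWord] using h2
    rfl
  | cons a w ih =>
    intro p q p' q' h1 h2 hne
    simp only [stepWord] at h1 h2 ⊢
    cases hd1 : δ p a with
    | none => rw [hd1] at h1; simp at h1
    | some p1 =>
      cases hd2 : δ q a with
      | none => rw [hd2] at h2; simp at h2
      | some q1 =>
        rw [hd1] at h1; rw [hd2] at h2
        simp only [Option.bind_some] at h1 h2
        have hne1 : p1 ≠ q1 := by
          rintro rfl
          rw [h1] at h2
          exact hne (by simpa using h2)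
        rw [pairStep_eq_some_of hd1 hd2 hne1]
        simpa using ih p1 q1 p' q' h1 h2 hne

variable [Fintype Q] [Fintype A]

/-- Sum over all words of length `L` that keep the pair `pq` alive, of the probability of
the word from the first component. -/
noncomputable def wordSum (δ : Q → A → Option Q) (P : Q → A → ℝ) (pq : Q × Q) (L : ℕ) : ℝ :=
  ∑ w : Fin L → A, if (stepWord (pairStep δ) pq (List.ofFn w)).isSome
    then probWord P δ pq.1 (List.ofFn w) else 0

lemma wordSum_nonneg (δ : Q → A → Option Q) (P : Q → A → ℝ) (h : ∀ q a, 0 ≤ P q a)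
    (pq : Q × Q) (L : ℕ) : 0 ≤ wordSum δ P pq L := by
  apply Finset.sum_nonneg
  intro w _
  split
  · exact probWord_nonneg' P δ h _ _
  · exact le_refl 0

lemma wordSum_zero (δ : Q → A → Option Q) (P : Q → A → ℝ) (pq : Q × Q) :
    wordSum δ P pq 0 = 1 := by
  unfold wordSum
  simp [stepWord, probWord, List.ofFn_zero]

lemma ofFn_cons {L : ℕ} (a : A) (v : Fin L → A) :
    List.ofFn (Fin.cons a v : Fin (L + 1) → A) = a :: List.ofFn v := by
  simp [List.ofFn_succ]

lemma wordSum_succ (δ : Q → A → Option Q) (P : Q → A → ℝ) (pq : Q × Q) (L : ℕ) :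
    wordSum δ P pq (L + 1) =
      ∑ a : A, (pairStep δ pq a).elim 0 (fun r => P pq.1 a * wordSum δ P r L) := by
  unfold wordSum
  rw [← Equiv.sum_comp (Fin.consEquiv (fun _ : Fin (L + 1) => A)), Fintype.sum_prod_type]
  refine Finset.sum_congr rfl fun a _ => ?_
  have hof : ∀ v : Fin L → A, List.ofFn ((Fin.consEquiv (fun _ : Fin (L + 1) => A)) (a, v))
      = a :: List.ofFn v := fun v => ofFn_cons a v
  cases hm : pairStep δ pq a with
  | none =>
    simp only [Option.elim_none]
    refine Finset.sum_eq_zero fun v _ => ?_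
    rw [hof v]
    simp [stepWord, hm]
  | some r =>
    obtain ⟨hd1, _, _⟩ := pairStep_eq_some hm
    simp only [Option.elim_some]
    rw [Finset.mul_sum]
    refine Finset.sum_congr rfl fun v _ => ?_
    rw [hof v]
    simp only [stepWord, hm, Option.bind_some, probWord, hd1, Option.elim_some]
    rw [mul_ite, mul_zero]

lemma RLrow_eq_wordSum (δ : Q → A → Option Q) (P : Q → A → ℝ) :
    ∀ (L : ℕ) (s : PairState Q), RLrow δ P L s = wordSum δ P s.val L := by
  intro L
  induction L with
  | zero =>
    intro s
    unfold RLrow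
    rw [wordSum_zero, pow_zero]
    simp [Matrix.one_apply]
  | succ L ih =>
    intro s
    unfold RLrow
    rw [wordSum_succ, pow_succ']
    simp only [Matrix.mul_apply]
    rw [Finset.sum_comm]
    have : ∀ u : PairState Q, ∑ t : PairState Q, pairMatrix δ P s u * (pairMatrix δ P ^ L) u t
        = pairMatrix δ P s u * wordSum δ P u.val L := by
      intro u
      rw [← Finset.mul_sum, ← ih u]
      rfl
    rw [Finset.sum_congr rfl fun u _ => this u]
    unfold pairMatrix
    rw [Finset.sum_congr rfl fun u (_ : u ∈ Finset.univ) => Finset.sum_mul _ _ _]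
    rw [Finset.sum_comm]
    refine Finset.sum_congr rfl fun a _ => ?_
    cases hm : pairStep δ s.val a with
    | none =>
      simp only [Option.elim_none]
      refine Finset.sum_eq_zero fun u _ => ?_
      rw [if_neg (by simp [hm]), zero_mul]
    | some r =>
      obtain ⟨_, _, hrne⟩ := pairStep_eq_some hm
      simp only [Option.elim_some]
      rw [Finset.sum_eq_single (⟨r, hrne⟩ : PairState Q)]
      · rw [if_pos rfl]
      · intro u _ hu
        have hnc : ¬ (some r = some (u.val : Q × Q)) := fun hc =>
          hu (Subtype.ext (Option.some.inj hc).symm)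
        rw [if_neg hnc, zero_mul]
      · intro hc
        exact absurd (Finset.mem_univ _) hc

lemma wordSum_diag (δ : Q → A → Option Q) (P : Q → A → ℝ) (q : Q) {L : ℕ} (hL : 1 ≤ L) :
    wordSum δ P (q, q) L = 0 := by
  obtain ⟨L', rfl⟩ : ∃ L', L = L' + 1 := ⟨L - 1, by omega⟩
  unfold wordSum
  refine Finset.sum_eq_zero fun w _ => ?_
  rw [List.ofFn_succ]
  simp [stepWord, pairStep_diag]

end Stmt2Aux

/-- for an exact ε-machine with `n` states and steady state distribution `π`,
`π_min · ‖T(A₂)^L‖₁ ≤ P_π(NSYN_L) ≤ n² · π_max · ‖T(A₂)^L‖₁` for each `L ≥ 1`, where `‖·‖₁`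
is the maximum row sum. -/
theorem stmt2 {Q A : Type*} [Fintype Q] [Fintype A] (M : EpsMachine Q A)
    (hexact : IsExact M) (π : Q → ℝ) (hπ : EpsIsStationary M.δ M.P π) (L : ℕ) (hL : 1 ≤ L) :
    sInf (Set.range π) * maxRowSum (pairMatrix M.δ M.P ^ L) ≤ nsynProb M.δ M.P π L ∧
      nsynProb M.δ M.P π L ≤
        (Fintype.card Q : ℝ) ^ 2 * sSup (Set.range π) * maxRowSum (pairMatrix M.δ M.P ^ L) := by
  classical
  obtain ⟨hpos, hsum, -⟩ := hπ
  have hpw : ∀ (w : List A) (q : Q), 0 ≤ probWord M.P M.δ q w :=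
    probWord_nonneg' M.P M.δ M.nonneg
  have hPpi : ∀ w : List A, 0 ≤ Ppi M.δ M.P π w := fun w =>
    Finset.sum_nonneg fun q _ => mul_nonneg (hpos q).le (hpw w q)
  have hQne : Nonempty Q := by
    by_contra h
    rw [not_nonempty_iff] at h
    rw [@Finset.univ_eq_empty Q _ h] at hsum
    simp at hsum
  haveI := hQne
  have hπle : ∀ q, π q ≤ sSup (Set.range π) := fun q =>
    le_csSup (Set.Finite.bddAbove (Set.finite_range π)) ⟨q, rfl⟩
  have hInfle : ∀ q, sInf (Set.range π) ≤ π q := fun q =>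
    csInf_le (Set.Finite.bddBelow (Set.finite_range π)) ⟨q, rfl⟩
  have hsmax : 0 ≤ sSup (Set.range π) :=
    le_trans (hpos (Classical.arbitrary Q)).le (hπle _)
  by_cases hPS : Nonempty (PairState Q)
  · -- main case
    obtain ⟨s₀, -, hs₀⟩ := Finset.exists_max_image Finset.univ
      (fun s : PairState Q => RLrow M.δ M.P L s) ⟨hPS.some, Finset.mem_univ _⟩
    have hbdd : BddAbove {x : ℝ | ∃ s : PairState Q,
        x = ∑ t : PairState Q, (pairMatrix M.δ M.P ^ L) s t} := by
      have heq : {x : ℝ | ∃ s : PairState Q, x = ∑ t : PairState Q, (pairMatrix M.δ M.P ^ L) s t}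
          = Set.range (fun s : PairState Q => ∑ t : PairState Q, (pairMatrix M.δ M.P ^ L) s t) := by
        ext x
        simp [Set.range, eq_comm]
      rw [heq]
      exact Set.Finite.bddAbove (Set.finite_range _)
    have hmem : ∀ s : PairState Q, RLrow M.δ M.P L s ≤ maxRowSum (pairMatrix M.δ M.P ^ L) :=
      fun s => le_csSup hbdd ⟨s, rfl⟩
    have hmrs : maxRowSum (pairMatrix M.δ M.P ^ L) = RLrow M.δ M.P L s₀ := by
      refine le_antisymm (csSup_le ⟨_, ⟨s₀, rfl⟩⟩ ?_) (hmem s₀)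
      rintro x ⟨s, rfl⟩
      exact hs₀ s (Finset.mem_univ s)
    have hR : 0 ≤ maxRowSum (pairMatrix M.δ M.P ^ L) := by
      rw [hmrs, RLrow_eq_wordSum]
      exact wordSum_nonneg M.δ M.P M.nonneg _ L
    constructor
    · -- lower bound
      rw [hmrs, RLrow_eq_wordSum]
      unfold wordSum nsynProb
      rw [Finset.mul_sum]
      refine Finset.sum_le_sum fun w _ => ?_
      by_cases hd : (stepWord (pairStep M.δ) s₀.val (List.ofFn w)).isSome
      · obtain ⟨r, hr⟩ := Option.isSome_iff_exists.mp hd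
        obtain ⟨h1, h2, h3⟩ := stepWord_pair_some (List.ofFn w) s₀.val r hr
        have hnre : ¬ IsResetWord M.δ (List.ofFn w) := by
          rintro ⟨r', -, hu⟩
          exact (h3 s₀.prop) ((hu _ _ h1).trans (hu _ _ h2).symm)
        rw [if_pos hd, if_neg hnre]
        calc sInf (Set.range π) * probWord M.P M.δ s₀.val.1 (List.ofFn w)
            ≤ π s₀.val.1 * probWord M.P M.δ s₀.val.1 (List.ofFn w) :=
              mul_le_mul_of_nonneg_right (hInfle _) (hpw _ _)
          _ ≤ Ppi M.δ M.P π (List.ofFn w) :=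
              Finset.single_le_sum (f := fun q => π q * probWord M.P M.δ q (List.ofFn w))
                (fun q _ => mul_nonneg (hpos q).le (hpw _ q)) (Finset.mem_univ s₀.val.1)
      · rw [if_neg hd, mul_zero]
        split
        · exact le_refl 0
        · exact hPpi _
    · -- upper bound
      have hub1 : ∀ w : List A, ¬ IsResetWord M.δ w →
          (∑ r : Q, probWord M.P M.δ r w) ≤ ∑ p : Q × Q,
            (if (stepWord (pairStep M.δ) p w).isSome then probWord M.P M.δ p.1 w else 0) := by
        intro w hnre
        rw [Fintype.sum_prod_type]
        refine Finset.sum_le_sum fun r _ => ?_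
        rcases (hpw w r).eq_or_lt with h0 | h0
        · rw [← h0]
          refine Finset.sum_nonneg fun q _ => ?_
          split
          · exact hpw w _
          · exact le_refl 0
        · have hsome : ∃ t, stepWord M.δ r w = some t := by
            cases hst : stepWord M.δ r w with
            | none => exact absurd (probWord_eq_zero' M.P M.δ M.zero_iff w r hst) h0.ne'
            | some t => exact ⟨t, rfl⟩
          obtain ⟨t, ht⟩ := hsome
          obtain ⟨q, u, hq, hut⟩ : ∃ q u, stepWord M.δ q w = some u ∧ u ≠ t := by
            by_contra hc
            push_neg at hc
            exact hnre ⟨t, ⟨r, ht⟩, fun q s hs => hc q s hs⟩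
          have hpair := stepWord_pair_of w r q t u ht hq (Ne.symm hut)
          calc probWord M.P M.δ r w
              = (if (stepWord (pairStep M.δ) (r, q) w).isSome
                  then probWord M.P M.δ (r, q).1 w else 0) := by
                rw [if_pos (by rw [hpair]; rfl)]
            _ ≤ ∑ q' : Q, (if (stepWord (pairStep M.δ) (r, q') w).isSome
                  then probWord M.P M.δ (r, q').1 w else 0) :=
                Finset.single_le_sum
                  (f := fun q' => if (stepWord (pairStep M.δ) (r, q') w).isSome
                    then probWord M.P M.δ (r, q').1 w else 0)
                  (fun q' _ => by dsimp only; split; exacts [hpw w _, le_refl 0])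
                  (Finset.mem_univ q)
      have hub2 : nsynProb M.δ M.P π L ≤
          sSup (Set.range π) * ∑ p : Q × Q, wordSum M.δ M.P p L := by
        have hcomm : ∑ p : Q × Q, wordSum M.δ M.P p L
            = ∑ w : Fin L → A, ∑ p : Q × Q,
              (if (stepWord (pairStep M.δ) p (List.ofFn w)).isSome
                then probWord M.P M.δ p.1 (List.ofFn w) else 0) := by
          unfold wordSum
          rw [Finset.sum_comm]
        rw [hcomm, Finset.mul_sum]
        unfold nsynProb
        refine Finset.sum_le_sum fun w _ => ?_
        by_cases hre : IsResetWord M.δ (List.ofFn w)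
        · rw [if_pos hre]
          exact mul_nonneg hsmax (Finset.sum_nonneg fun p _ => by
            split
            exacts [hpw _ _, le_refl 0])
        · rw [if_neg hre]
          calc Ppi M.δ M.P π (List.ofFn w)
              ≤ ∑ q : Q, sSup (Set.range π) * probWord M.P M.δ q (List.ofFn w) :=
                Finset.sum_le_sum fun q _ => mul_le_mul_of_nonneg_right (hπle q) (hpw _ q)
            _ = sSup (Set.range π) * ∑ q : Q, probWord M.P M.δ q (List.ofFn w) := by
                rw [Finset.mul_sum]
            _ ≤ _ := mul_le_mul_of_nonneg_left (hub1 _ hre) hsmax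
      have hdiag : ∑ p : Q × Q, wordSum M.δ M.P p L = ∑ s : PairState Q, RLrow M.δ M.P L s := by
        have h1 : ∑ p ∈ Finset.univ.filter (fun p : Q × Q => p.1 ≠ p.2), wordSum M.δ M.P p L
            = ∑ p : Q × Q, wordSum M.δ M.P p L := by
          refine Finset.sum_filter_of_ne fun p _ hne => ?_
          obtain ⟨p1, p2⟩ := p
          intro h12
          have h12' : p1 = p2 := h12
          subst h12'
          exact hne (wordSum_diag M.δ M.P p1 hL)
        have h2 : ∑ p ∈ Finset.univ.filter (fun p : Q × Q => p.1 ≠ p.2), wordSum M.δ M.P p L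
            = ∑ s : PairState Q, wordSum M.δ M.P s.val L :=
          Finset.sum_subtype _ (fun p => by simp) (fun p => wordSum M.δ M.P p L)
        rw [← h1, h2]
        exact Finset.sum_congr rfl fun s _ => (RLrow_eq_wordSum M.δ M.P L s).symm
      have hsumR : ∑ s : PairState Q, RLrow M.δ M.P L s
          ≤ (Fintype.card (PairState Q) : ℝ) * maxRowSum (pairMatrix M.δ M.P ^ L) := by
        calc ∑ s : PairState Q, RLrow M.δ M.P L s
            ≤ ∑ _s : PairState Q, maxRowSum (pairMatrix M.δ M.P ^ L) :=
              Finset.sum_le_sum fun s _ => hmem s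
          _ = _ := by rw [Finset.sum_const, Finset.card_univ, nsmul_eq_mul]
      have hcard : (Fintype.card (PairState Q) : ℝ) ≤ (Fintype.card Q : ℝ) ^ 2 := by
        have h := Fintype.card_subtype_le (fun pq : Q × Q => pq.1 ≠ pq.2)
        rw [Fintype.card_prod] at h
        have h' : (Fintype.card (PairState Q) : ℝ) ≤ (Fintype.card Q : ℝ) * Fintype.card Q := by
          exact_mod_cast h
        nlinarith [h']
      refine hub2.trans ?_
      rw [hdiag]
      calc sSup (Set.range π) * ∑ s : PairState Q, RLrow M.δ M.P L s
          ≤ sSup (Set.range π) *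
            ((Fintype.card (PairState Q) : ℝ) * maxRowSum (pairMatrix M.δ M.P ^ L)) :=
            mul_le_mul_of_nonneg_left hsumR hsmax
        _ ≤ sSup (Set.range π) *
            ((Fintype.card Q : ℝ) ^ 2 * maxRowSum (pairMatrix M.δ M.P ^ L)) :=
            mul_le_mul_of_nonneg_left (mul_le_mul_of_nonneg_right hcard hR) hsmax
        _ = (Fintype.card Q : ℝ) ^ 2 * sSup (Set.range π) * maxRowSum (pairMatrix M.δ M.P ^ L) := by
            ring
  · -- degenerate case : no pair of distinct states
    have hss : ∀ p q : Q, p = q := by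
      intro p q
      by_contra hne
      exact hPS ⟨⟨(p, q), hne⟩⟩
    have hns : nsynProb M.δ M.P π L = 0 := by
      unfold nsynProb
      refine Finset.sum_eq_zero fun w _ => ?_
      by_cases hr : IsResetWord M.δ (List.ofFn w)
      · rw [if_pos hr]
      · rw [if_neg hr]
        unfold Ppi
        refine Finset.sum_eq_zero fun q _ => ?_
        cases hst : stepWord M.δ q (List.ofFn w) with
        | none => rw [probWord_eq_zero' M.P M.δ M.zero_iff _ _ hst, mul_zero]
        | some t =>
          refine absurd (⟨t, ⟨q, hst⟩, fun q' s hs => ?_⟩ : IsResetWord M.δ (List.ofFn w)) hr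
          rw [hss q' q] at hs
          exact Option.some.inj (hs.symm.trans hst)
    have hmrs : maxRowSum (pairMatrix M.δ M.P ^ L) = 0 := by
      unfold maxRowSum
      convert Real.sSup_empty
      rw [Set.eq_empty_iff_forall_notMem]
      rintro x ⟨s, -⟩
      exact hPS ⟨s⟩
    rw [hns, hmrs]
    constructor <;> simp
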